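/- In the β = 1 clustered two-stage design (Stage 1: union U of pn_c/q uniformly random clusters from an equal-size partition Π of [n] into n_c ≥ 2 clusters; Stage 2 conditional on U: z^1 a uniformly random size-(pn) subset of U), the variance over U of the conditional expectation of TTE-hat = (1/(np)) Σ_j L_j z^1_j given U equals ((q−p)/(p(n_c−1))) · Var̂_{π∈Π}(L̄_π). -/

import Mathlib

open Finset

private lemma key_bij {α : Type*} [DecidableEq α] (S : Finset α) (k : ℕ)
    (F : α → Finset α → ℝ) :
    ∑ A ∈ S.powersetCard (k + 1), ∑ j ∈ A, F j (A.erase j)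
      = ∑ j ∈ S, ∑ D ∈ (S.erase j).powersetCard k, F j D := by
  rw [Finset.sum_sigma', Finset.sum_sigma']
  refine Finset.sum_bij' (fun x _ => (⟨x.2, x.1.erase x.2⟩ : Σ _ : α, Finset α))
    (fun x _ => (⟨insert x.1 x.2, x.1⟩ : Σ _ : Finset α, α)) ?_ ?_ ?_ ?_ ?_
  · rintro ⟨A, j⟩ hx
    simp only [Finset.mem_sigma, Finset.mem_powersetCard] at hx ⊢
    obtain ⟨⟨hAS, hAc⟩, hjA⟩ := hx
    refine ⟨hAS hjA, Finset.erase_subset_erase _ hAS, ?_⟩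
    rw [Finset.card_erase_of_mem hjA, hAc]; rfl
  · rintro ⟨j, D⟩ hx
    simp only [Finset.mem_sigma, Finset.mem_powersetCard] at hx ⊢
    obtain ⟨hjS, hDS, hDc⟩ := hx
    have hjD : j ∉ D := fun h => (Finset.mem_erase.1 (hDS h)).1 rfl
    refine ⟨⟨?_, ?_⟩, Finset.mem_insert_self _ _⟩
    · exact Finset.insert_subset hjS (hDS.trans (Finset.erase_subset _ _))
    · rw [Finset.card_insert_of_notMem hjD, hDc]
  · rintro ⟨A, j⟩ hx
    simp only [Finset.mem_sigma, Finset.mem_powersetCard] at hx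
    simp [Finset.insert_erase hx.2]
  · rintro ⟨j, D⟩ hx
    simp only [Finset.mem_sigma, Finset.mem_powersetCard] at hx
    have hjD : j ∉ D := fun h => (Finset.mem_erase.1 (hx.2.1 h)).1 rfl
    simp [Finset.erase_insert hjD]
  · rintro ⟨A, j⟩ _; rfl

private lemma aux1 {α : Type*} [DecidableEq α] (S : Finset α) (k : ℕ) (f : α → ℝ) :
    ∑ A ∈ S.powersetCard (k + 1), ∑ j ∈ A, f j
      = ((S.card - 1).choose k : ℝ) * ∑ j ∈ S, f j := by
  rw [key_bij S k (fun j _ => f j), Finset.mul_sum]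
  refine Finset.sum_congr rfl fun j hj => ?_
  rw [Finset.sum_const, Finset.card_powersetCard, Finset.card_erase_of_mem hj,
    nsmul_eq_mul]

private lemma aux2 {α : Type*} [DecidableEq α] (S : Finset α) (k : ℕ) (f : α → ℝ) :
    ∑ A ∈ S.powersetCard (k + 1), (∑ j ∈ A, f j) ^ 2
      = ((S.card - 1).choose k : ℝ) * ∑ j ∈ S, (f j) ^ 2
        + (if k = 0 then (0:ℝ) else ((S.card - 2).choose (k - 1) : ℝ)) *
            ((∑ j ∈ S, f j) ^ 2 - ∑ j ∈ S, (f j) ^ 2) := by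
  have expand : ∀ A ∈ S.powersetCard (k + 1),
      (∑ j ∈ A, f j) ^ 2
        = (∑ j ∈ A, (f j) ^ 2) + ∑ j ∈ A, (f j * ∑ j' ∈ A.erase j, f j') := by
    intro A _
    rw [← Finset.sum_add_distrib, sq, Finset.sum_mul]
    refine Finset.sum_congr rfl fun j hj => ?_
    rw [← Finset.add_sum_erase A f hj]; ring
  rw [Finset.sum_congr rfl expand, Finset.sum_add_distrib, aux1 S k (fun j => f j ^ 2)]
  congr 1
  rw [key_bij S k (fun j D => f j * ∑ j' ∈ D, f j')]
  cases k with
  | zero => simp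
  | succ k' =>
    have hsq : (∑ j ∈ S, f j) ^ 2 - ∑ j ∈ S, (f j) ^ 2
        = ∑ j ∈ S, f j * ((∑ j' ∈ S, f j') - f j) := by
      simp only [mul_sub, Finset.sum_sub_distrib, ← Finset.sum_mul, sq]
    rw [if_neg (Nat.succ_ne_zero k'), hsq, Finset.mul_sum]
    refine Finset.sum_congr rfl fun j hj => ?_
    rw [← Finset.mul_sum, aux1 (S.erase j) k' f, Finset.card_erase_of_mem hj,
      Finset.sum_erase_eq_sub hj]
    have h1 : S.card - 1 - 1 = S.card - 2 := by omega
    have h2 : k' + 1 - 1 = k' := by omega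
    rw [h1, h2]; ring

/-- in the `β = 1` clustered two-stage design (Stage 1: `U` the union of
`pn_c/q` uniformly random clusters from an equal-size partition `Cl` of `[n]` into
`n_c ≥ 2` clusters; Stage 2 conditional on `U`: `z^1` a uniformly random size-`pn`
subset of `U`), the variance over `U` of the conditional expectation of
`TTE-hat = (1/(np)) Σ_j L_j z^1_j` given `U` equals
`((q−p)/(p(n_c−1))) · Var̂_{π∈Π}(L̄_π)`. -/
theorem stmt_15 (n n_c s : ℕ) (hnc : 2 ≤ n_c) (hns : n = n_c * s)
    (p q : ℝ) (hp0 : 0 < p) (hp1 : p < 1) (hpq : p ≤ q) (hq1 : q ≤ 1)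
    (Cl : Finset (Finset (Fin n))) (hClcard : Cl.card = n_c)
    (hdisj : ∀ π ∈ Cl, ∀ π' ∈ Cl, π ≠ π' → Disjoint π π')
    (hcover : ∀ i : Fin n, ∃ π ∈ Cl, i ∈ π)
    (hsize : ∀ π ∈ Cl, π.card = s)
    (kc : ℕ) (hkc : (kc : ℝ) = p * (n_c : ℝ) / q)
    (m : ℕ) (hm : (m : ℝ) = p * (n : ℝ))
    (Nbhd : Fin n → Finset (Fin n)) (c1 : Fin n → Fin n → ℝ)
    (L : Fin n → ℝ)
    (hL : ∀ j, L j = ∑ i ∈ Finset.univ.filter (fun i => j ∈ Nbhd i), c1 i j)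
    (Lbar : Finset (Fin n) → ℝ)
    (hLbar : ∀ π, Lbar π = ((n_c : ℝ) / (n : ℝ)) * ∑ j ∈ π, L j)
    (TTEhat : Finset (Fin n) → ℝ)
    (hT : ∀ A, TTEhat A = (1 / ((n : ℝ) * p)) * ∑ j ∈ A, L j)
    (condE : Finset (Finset (Fin n)) → (Finset (Fin n) → ℝ) → ℝ)
    (hcondE : ∀ C g, condE C g =
      (∑ A ∈ (C.sup id).powersetCard m, g A) / ((kc * s).choose m : ℝ)) :
    (∑ C ∈ Cl.powersetCard kc, (condE C TTEhat) ^ 2) / (n_c.choose kc : ℝ) -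
      ((∑ C ∈ Cl.powersetCard kc, condE C TTEhat) / (n_c.choose kc : ℝ)) ^ 2 =
      ((q - p) / (p * ((n_c : ℝ) - 1))) *
        ((1 / (n_c : ℝ)) * ∑ π ∈ Cl, (Lbar π) ^ 2 -
          ((1 / (n_c : ℝ)) * ∑ π ∈ Cl, Lbar π) ^ 2) := by
  have hq0 : (0:ℝ) < q := lt_of_lt_of_le hp0 hpq
  have hncR : (2:ℝ) ≤ (n_c:ℝ) := by exact_mod_cast hnc
  have hnc0 : (0:ℝ) < (n_c:ℝ) := by linarith
  have hs1 : 1 ≤ s := by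
    by_contra h
    push_neg at h
    interval_cases s
    have hsub : Cl ⊆ {∅} := by
      intro π hπ
      simp only [Finset.mem_singleton]
      exact Finset.card_eq_zero.1 (hsize π hπ)
    have := Finset.card_le_card hsub
    simp [hClcard] at this
    omega
  have hn1 : 1 ≤ n := by
    have := Nat.mul_le_mul hnc hs1
    omega
  have hnR0 : (0:ℝ) < (n:ℝ) := by exact_mod_cast hn1
  have hkcR0 : (0:ℝ) < (kc:ℝ) := by
    rw [hkc]; positivity
  have hkcpos : 1 ≤ kc := by exact_mod_cast hkcR0
  have hkq : (kc:ℝ) * q = p * (n_c:ℝ) := by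
    rw [hkc]; field_simp
  have hkcn : kc ≤ n_c := by
    have : (kc:ℝ) ≤ (n_c:ℝ) := by
      rw [hkc, div_le_iff₀ hq0]
      nlinarith
    exact_mod_cast this
  have hm1 : 1 ≤ m := by
    have h0 : (0:ℝ) < (m:ℝ) := by rw [hm]; positivity
    exact_mod_cast h0
  have hmks : m ≤ kc * s := by
    have hsR0 : (0:ℝ) < (s:ℝ) := by exact_mod_cast hs1
    have h1 : (m:ℝ) ≤ (kc:ℝ) * (s:ℝ) := by
      rw [hm, hns, hkc]
      push_cast
      rw [div_mul_eq_mul_div, le_div_iff₀ hq0]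
      have hle : p * (n_c:ℝ) * (s:ℝ) * q ≤ p * (n_c:ℝ) * (s:ℝ) :=
        mul_le_of_le_one_right (by positivity) hq1
      nlinarith [hle]
    exact_mod_cast h1
  have hks1 : 1 ≤ kc * s := Nat.one_le_iff_ne_zero.2 (by positivity)
  have hBks : (0:ℝ) < ((kc*s).choose m : ℝ) := by
    exact_mod_cast Nat.choose_pos hmks
  have hchm : ((kc:ℝ) * (s:ℝ)) * (((kc*s - 1).choose (m-1) : ℕ) : ℝ)
      = (((kc*s).choose m : ℕ) : ℝ) * (m:ℝ) := by
    have h := Nat.add_one_mul_choose_eq (kc*s - 1) (m - 1)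
    rw [Nat.sub_add_cancel hks1, Nat.sub_add_cancel hm1] at h
    exact_mod_cast h
  -- simplification of the conditional expectation
  have hcond : ∀ C ∈ Cl.powersetCard kc,
      condE C TTEhat = (1/(kc:ℝ)) * ∑ π ∈ C, Lbar π := by
    intro C hC
    obtain ⟨hCsub, hCcard⟩ := Finset.mem_powersetCard.1 hC
    have hdisjC : ∀ π ∈ C, ∀ π' ∈ C, π ≠ π' → Disjoint (id π) (id π') :=
      fun a ha b hb hab => hdisj a (hCsub ha) b (hCsub hb) hab
    have hU : C.sup id = C.biUnion id := Finset.sup_eq_biUnion C id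
    have hUcard : (C.sup id).card = kc * s := by
      rw [hU, Finset.card_biUnion hdisjC]
      have hss : ∀ π ∈ C, (id π).card = s := fun π hπ => hsize π (hCsub hπ)
      rw [Finset.sum_congr rfl hss, Finset.sum_const, hCcard, smul_eq_mul]
    have hUsum : ∑ j ∈ C.sup id, L j = (s:ℝ) * ∑ π ∈ C, Lbar π := by
      rw [hU, Finset.sum_biUnion
        (fun a ha b hb hab => hdisjC a (Finset.mem_coe.1 ha) b (Finset.mem_coe.1 hb) hab),
        Finset.mul_sum]
      refine Finset.sum_congr rfl fun π hπ => ?_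
      have hnR : (n:ℝ) = (n_c:ℝ) * (s:ℝ) := by rw [hns]; push_cast; ring
      have hsR0 : (0:ℝ) < (s:ℝ) := by exact_mod_cast hs1
      simp only [id]
      rw [hLbar π, hnR]
      field_simp
    have hTsum : ∑ A ∈ (C.sup id).powersetCard m, TTEhat A
        = (1/((n:ℝ)*p)) * ((((kc*s - 1).choose (m-1) : ℕ) : ℝ) * ∑ j ∈ C.sup id, L j) := by
      rw [Finset.sum_congr rfl (fun A _ => hT A), ← Finset.mul_sum]
      congr 1
      have h1 := aux1 (C.sup id) (m-1) L
      rw [Nat.sub_add_cancel hm1, hUcard] at h1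
      exact h1
    rw [hcondE, hTsum, hUsum]
    have hsR0 : (0:ℝ) < (s:ℝ) := by exact_mod_cast hs1
    have he1 : (((kc*s - 1).choose (m-1) : ℕ) : ℝ)
        = (((kc*s).choose m : ℕ) : ℝ) * (m:ℝ) / ((kc:ℝ) * (s:ℝ)) := by
      rw [eq_div_iff (by positivity)]
      linarith [hchm]
    rw [he1, hm]
    field_simp
  -- rewrite the two sums
  have hS2 : ∑ C ∈ Cl.powersetCard kc, (condE C TTEhat) ^ 2
      = ∑ C ∈ Cl.powersetCard kc, ((1/(kc:ℝ)) * ∑ π ∈ C, Lbar π) ^ 2 :=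
    Finset.sum_congr rfl fun C hC => by rw [hcond C hC]
  have hS1 : ∑ C ∈ Cl.powersetCard kc, condE C TTEhat
      = ∑ C ∈ Cl.powersetCard kc, ((1/(kc:ℝ)) * ∑ π ∈ C, Lbar π) :=
    Finset.sum_congr rfl fun C hC => hcond C hC
  rw [hS2, hS1]
  simp_rw [mul_pow]
  rw [← Finset.mul_sum, ← Finset.mul_sum]
  have H1 := aux1 Cl (kc-1) Lbar
  have H2 := aux2 Cl (kc-1) Lbar
  rw [Nat.sub_add_cancel hkcpos, hClcard] at H1 H2
  rw [H1, H2]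
  -- notation
  set S1 := ∑ π ∈ Cl, Lbar π with hS1d
  set S2 := ∑ π ∈ Cl, (Lbar π) ^ 2 with hS2d
  set B : ℝ := (n_c.choose kc : ℝ) with hBd
  set A1 : ℝ := ((n_c - 1).choose (kc - 1) : ℝ) with hA1d
  set D : ℝ := (if kc - 1 = 0 then (0:ℝ) else ((n_c - 2).choose (kc - 1 - 1) : ℝ)) with hDd
  have hB0 : (0:ℝ) < B := by
    rw [hBd]; exact_mod_cast Nat.choose_pos hkcn
  have hnc1 : 1 ≤ n_c := by omega
  have hA1' : A1 * (n_c:ℝ) = (kc:ℝ) * B := by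
    have h := Nat.add_one_mul_choose_eq (n_c - 1) (kc - 1)
    rw [Nat.sub_add_cancel hnc1, Nat.sub_add_cancel hkcpos] at h
    rw [hA1d, hBd]
    exact_mod_cast by linarith [show ((n_c * (n_c-1).choose (kc-1) : ℕ):ℝ) = ((n_c.choose kc * kc : ℕ):ℝ) from congrArg _ h]
  have hD' : D * ((n_c:ℝ) * ((n_c:ℝ) - 1)) = (kc:ℝ) * ((kc:ℝ) - 1) * B := by
    by_cases hk1 : kc = 1
    · subst hk1
      simp [hDd]
    · have hkc2 : 2 ≤ kc := by omega
      have hnat : n_c * (n_c - 1) * ((n_c - 2).choose (kc - 2))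
          = n_c.choose kc * kc * (kc - 1) := by
        have h2 := Nat.add_one_mul_choose_eq (n_c - 2) (kc - 2)
        rw [show n_c - 2 + 1 = n_c - 1 by omega, show kc - 2 + 1 = kc - 1 by omega] at h2
        have h1 := Nat.add_one_mul_choose_eq (n_c - 1) (kc - 1)
        rw [Nat.sub_add_cancel hnc1, Nat.sub_add_cancel hkcpos] at h1
        calc n_c * (n_c - 1) * ((n_c - 2).choose (kc - 2))
            = n_c * ((n_c - 1) * ((n_c - 2).choose (kc - 2))) := by ring
          _ = n_c * ((n_c - 1).choose (kc - 1) * (kc - 1)) := by rw [h2]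
          _ = (n_c * (n_c - 1).choose (kc - 1)) * (kc - 1) := by ring
          _ = (n_c.choose kc * kc) * (kc - 1) := by rw [h1]
          _ = n_c.choose kc * kc * (kc - 1) := by ring
      have hcast : ((n_c:ℝ)) * ((n_c:ℝ) - 1) * (((n_c - 2).choose (kc - 2) : ℕ) : ℝ)
          = B * (kc:ℝ) * ((kc:ℝ) - 1) := by
        rw [hBd]
        have := congrArg (fun x : ℕ => (x : ℝ)) hnat
        push_cast [Nat.cast_sub hnc1, Nat.cast_sub hkcpos] at this
        linarith
      rw [hDd, if_neg (by omega : ¬ kc - 1 = 0), show kc - 1 - 1 = kc - 2 by omega]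
      linarith
  -- rewrite the coefficient
  have hnc1R : (0:ℝ) < (n_c:ℝ) - 1 := by linarith
  have hcoef : (q - p) / (p * ((n_c:ℝ) - 1))
      = ((n_c:ℝ) - (kc:ℝ)) / ((kc:ℝ) * ((n_c:ℝ) - 1)) := by
    rw [div_eq_div_iff (by positivity) (by positivity)]
    linear_combination ((n_c:ℝ) - 1) * hkq
  rw [hcoef]
  have hA1'' : A1 = (kc:ℝ) * B / (n_c:ℝ) := by
    rw [eq_div_iff (ne_of_gt hnc0)]
    linarith
  have hD'' : D = (kc:ℝ) * ((kc:ℝ) - 1) * B / ((n_c:ℝ) * ((n_c:ℝ) - 1)) := by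
    rw [eq_div_iff (by positivity)]
    linarith
  rw [hA1'', hD'']
  field_simp
  ring
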